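/- Under the stated MHE setting, if for every ξ = (x₀,…,x_N) ∈ ℝ^{(N+1)n} and every i = 0,…,N−1 the 2n×2n matrix H̿_i(ξ) is diagonally dominant (for each row, the absolute value of the diagonal entry is at least the sum of the absolute values of the off-diagonal entries in that row) and the diagonal entries of A₁₁^{(i)} are nonnegative, then the MHE objective F is convex on ℝ^{(N+1)n}. -/

import Mathlib

open Matrix

/-- The `i`-th block of length `n` of a vector in `ℝ^{(N+1)n}`. -/
def blk {n N : ℕ} (ξ : Fin (N + 1) × Fin n → ℝ) (i : Fin (N + 1)) : Fin n → ℝ :=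
  fun a => ξ (i, a)

/-- Quadratic form `vᵀ M v`. -/
def quadForm {ι : Type*} [Fintype ι] (M : Matrix ι ι ℝ) (v : ι → ℝ) : ℝ :=
  v ⬝ᵥ M.mulVec v

/-- Jacobian matrix of `x ↦ f x u` at `x`. -/
noncomputable def jacF {n m : ℕ} (f : (Fin n → ℝ) → (Fin m → ℝ) → (Fin n → ℝ))
    (u : Fin m → ℝ) (x : Fin n → ℝ) : Matrix (Fin n) (Fin n) ℝ :=
  Matrix.of fun i j => fderiv ℝ (fun z => f z u i) x (Pi.single j 1)

/-- Jacobian matrix of `h` at `x`. -/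
noncomputable def jacH {n p : ℕ} (h : (Fin n → ℝ) → (Fin p → ℝ)) (x : Fin n → ℝ) :
    Matrix (Fin p) (Fin n) ℝ :=
  Matrix.of fun i j => fderiv ℝ (fun z => h z i) x (Pi.single j 1)

/-- Hessian matrix of a scalar function `φ` at `x`. -/
noncomputable def hessComp {n : ℕ} (φ : (Fin n → ℝ) → ℝ) (x : Fin n → ℝ) :
    Matrix (Fin n) (Fin n) ℝ :=
  Matrix.of fun a b => fderiv ℝ (fun z => fderiv ℝ φ z (Pi.single b 1)) x (Pi.single a 1)

/-- The MHE objective `F`. -/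
noncomputable def mheF {n m p N : ℕ} (f : (Fin n → ℝ) → (Fin m → ℝ) → (Fin n → ℝ))
    (h : (Fin n → ℝ) → (Fin p → ℝ))
    (Q : Matrix (Fin n) (Fin n) ℝ) (R : Matrix (Fin p) (Fin p) ℝ)
    (P : Matrix (Fin n) (Fin n) ℝ)
    (u : Fin N → Fin m → ℝ) (y : Fin N → Fin p → ℝ) (xhat : Fin n → ℝ)
    (ξ : Fin (N + 1) × Fin n → ℝ) : ℝ :=
  (∑ i : Fin N, quadForm Q⁻¹ (blk ξ i.succ - f (blk ξ i.castSucc) (u i)))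
    + (∑ i : Fin N, quadForm R⁻¹ (y i - h (blk ξ i.castSucc)))
    + quadForm P⁻¹ (blk ξ 0 - xhat)

/-- The block `A₁₁^{(i)}`. -/
noncomputable def mheA11 {n m p N : ℕ} (f : (Fin n → ℝ) → (Fin m → ℝ) → (Fin n → ℝ))
    (h : (Fin n → ℝ) → (Fin p → ℝ))
    (Q : Matrix (Fin n) (Fin n) ℝ) (R : Matrix (Fin p) (Fin p) ℝ)
    (P : Matrix (Fin n) (Fin n) ℝ)
    (u : Fin N → Fin m → ℝ) (y : Fin N → Fin p → ℝ)
    (ξ : Fin (N + 1) × Fin n → ℝ) (i : Fin N) : Matrix (Fin n) (Fin n) ℝ :=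
  (jacF f (u i) (blk ξ i.castSucc))ᵀ * Q⁻¹ * jacF f (u i) (blk ξ i.castSucc)
    + (∑ k : Fin n, ((f (blk ξ i.castSucc) (u i) k - blk ξ i.succ k) * Q⁻¹ k k) •
        hessComp (fun z => f z (u i) k) (blk ξ i.castSucc))
    + (jacH h (blk ξ i.castSucc))ᵀ * R⁻¹ * jacH h (blk ξ i.castSucc)
    + (∑ k : Fin p, ((h (blk ξ i.castSucc) k - y i k) * R⁻¹ k k) •
        hessComp (fun z => h z k) (blk ξ i.castSucc))
    + (if (i : ℕ) = 0 then P⁻¹ else 0)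

/-- The `2n × 2n` block matrix `H̿_i(ξ)`. -/
noncomputable def mheHbb {n m p N : ℕ} (f : (Fin n → ℝ) → (Fin m → ℝ) → (Fin n → ℝ))
    (h : (Fin n → ℝ) → (Fin p → ℝ))
    (Q : Matrix (Fin n) (Fin n) ℝ) (R : Matrix (Fin p) (Fin p) ℝ)
    (P : Matrix (Fin n) (Fin n) ℝ)
    (u : Fin N → Fin m → ℝ) (y : Fin N → Fin p → ℝ)
    (ξ : Fin (N + 1) × Fin n → ℝ) (i : Fin N) :
    Matrix (Fin n ⊕ Fin n) (Fin n ⊕ Fin n) ℝ :=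
  Matrix.fromBlocks (mheA11 f h Q R P u y ξ i)
    (-((jacF f (u i) (blk ξ i.castSucc))ᵀ * Q⁻¹))
    (-(Q⁻¹ * jacF f (u i) (blk ξ i.castSucc)))
    Q⁻¹

lemma convexOn_univ_of_hasDerivAt2 {g g1 g2 : ℝ → ℝ}
    (h1 : ∀ t, HasDerivAt g (g1 t) t) (h2 : ∀ t, HasDerivAt g1 (g2 t) t)
    (h3 : ∀ t, 0 ≤ g2 t) : ConvexOn ℝ Set.univ g := by
  have hd : deriv g = g1 := funext fun t => (h1 t).deriv
  apply convexOn_of_deriv2_nonneg convex_univ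
  · exact fun t _ => (h1 t).differentiableAt.continuousAt.continuousWithinAt
  · exact fun t _ => (h1 t).differentiableAt.differentiableWithinAt
  · rw [hd]; exact fun t _ => (h2 t).differentiableAt.differentiableWithinAt
  · intro t _
    have : deriv^[2] g t = deriv (deriv g) t := rfl
    rw [this, hd, (h2 t).deriv]; exact h3 t

lemma convexOn_univ_of_lines {E : Type*} [AddCommGroup E] [Module ℝ E] (F : E → ℝ)
    (hl : ∀ x v : E, ConvexOn ℝ Set.univ fun t : ℝ => F (x + t • v)) :
    ConvexOn ℝ Set.univ F := by
  refine ⟨convex_univ, fun x _ y _ a b ha hb hab => ?_⟩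
  have h := (hl x (y - x)).2 (Set.mem_univ (0:ℝ)) (Set.mem_univ (1:ℝ)) ha hb hab
  simp only [smul_eq_mul, mul_zero, mul_one, zero_add, zero_smul, add_zero, one_smul] at h
  have e1 : x + b • (y - x) = a • x + b • y := by
    have : a = 1 - b := by linarith
    subst this
    rw [smul_sub, sub_smul, one_smul]
    abel
  have e2 : x + (y - x) = y := by abel
  rwa [e1, e2] at h

lemma erase_sum_swap {ι : Type*} [Fintype ι] [DecidableEq ι] (G : ι → ι → ℝ) :
    ∑ r : ι, ∑ s ∈ Finset.univ.erase r, G r s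
      = ∑ r : ι, ∑ s ∈ Finset.univ.erase r, G s r := by
  have key : ∀ (H : ι → ι → ℝ) (r : ι), ∑ s ∈ Finset.univ.erase r, H r s
      = ∑ s : ι, if s ≠ r then H r s else 0 := by
    intro H r
    rw [← Finset.filter_ne' Finset.univ r, Finset.sum_filter]
  rw [Finset.sum_congr rfl fun r _ => key G r,
    Finset.sum_congr rfl fun r _ => key (fun a b => G b a) r, Finset.sum_comm]
  apply Finset.sum_congr rfl; intro r _
  apply Finset.sum_congr rfl; intro s _
  by_cases hrs : r = s <;> simp [hrs, ne_comm]

lemma dd_quadForm_nonneg {ι : Type*} [Fintype ι] [DecidableEq ι] (M : Matrix ι ι ℝ)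
    (hs : ∀ r s, M r s = M s r) (hdg : ∀ r, 0 ≤ M r r)
    (hdd : ∀ r, ∑ s ∈ Finset.univ.erase r, |M r s| ≤ |M r r|) (v : ι → ℝ) :
    0 ≤ v ⬝ᵥ M.mulVec v := by
  set Sa : ι → ℝ := fun r => ∑ s ∈ Finset.univ.erase r, |M r s| * v r ^ 2 / 2 with hSa
  set Sb : ι → ℝ := fun r => ∑ s ∈ Finset.univ.erase r, |M r s| * v s ^ 2 / 2 with hSb
  have expand : v ⬝ᵥ M.mulVec v
      = ∑ r : ι, (M r r * v r ^ 2 + ∑ s ∈ Finset.univ.erase r, v r * M r s * v s) := by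
    rw [Matrix.dotProduct_mulVec]
    unfold dotProduct Matrix.vecMul
    apply Finset.sum_congr rfl; intro r _
    show (∑ s : ι, v s * M s r) * v r = _
    rw [← Finset.add_sum_erase (a := r) _ _ (Finset.mem_univ r), add_mul, Finset.sum_mul]
    congr 1
    · ring
    · apply Finset.sum_congr rfl; intro s _; rw [hs s r]; ring
  rw [expand]
  have eSb : ∑ r : ι, Sb r = ∑ r : ι, Sa r := by
    rw [hSb, hSa]
    rw [erase_sum_swap (fun r s => |M r s| * v s ^ 2 / 2)]
    apply Finset.sum_congr rfl; intro r _
    apply Finset.sum_congr rfl; intro s _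
    rw [hs s r]
  have step1 : ∀ r : ι, -(Sa r + Sb r) ≤ ∑ s ∈ Finset.univ.erase r, v r * M r s * v s := by
    intro r
    rw [hSa, hSb, ← Finset.sum_add_distrib, ← Finset.sum_neg_distrib]
    apply Finset.sum_le_sum
    intro s _
    have h1 : |v r * M r s * v s| ≤ |M r s| * v r ^ 2 / 2 + |M r s| * v s ^ 2 / 2 := by
      rw [abs_mul, abs_mul]
      nlinarith [abs_nonneg (M r s), abs_nonneg (v r), abs_nonneg (v s),
        sq_abs (v r), sq_abs (v s), sq_nonneg (|v r| - |v s|)]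
    have := neg_abs_le (v r * M r s * v s)
    linarith
  have lower : ∑ r : ι, (M r r * v r ^ 2 - (Sa r + Sb r))
      ≤ ∑ r : ι, (M r r * v r ^ 2 + ∑ s ∈ Finset.univ.erase r, v r * M r s * v s) := by
    apply Finset.sum_le_sum; intro r _
    have := step1 r; linarith
  refine le_trans ?_ lower
  have split : ∑ r : ι, (M r r * v r ^ 2 - (Sa r + Sb r))
      = ∑ r : ι, (M r r * v r ^ 2 - 2 * Sa r) := by
    rw [Finset.sum_sub_distrib, Finset.sum_sub_distrib, Finset.sum_add_distrib, eSb,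
      ← Finset.mul_sum]
    ring
  rw [split]
  apply Finset.sum_nonneg
  intro r _
  have h2Sa : 2 * Sa r = (∑ s ∈ Finset.univ.erase r, |M r s|) * v r ^ 2 := by
    rw [hSa, Finset.mul_sum, Finset.sum_mul]
    apply Finset.sum_congr rfl; intro s _; ring
  have hb : (∑ s ∈ Finset.univ.erase r, |M r s|) * v r ^ 2 ≤ M r r * v r ^ 2 := by
    apply mul_le_mul_of_nonneg_right _ (sq_nonneg _)
    have := hdd r
    rwa [abs_of_nonneg (hdg r)] at this
  rw [h2Sa]
  linarith
variable {ι : Type*} [Fintype ι] [DecidableEq ι]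

/-- a vector is the sum of its coordinates times basis vectors -/
lemma vec_eq_sum (v : ι → ℝ) : v = ∑ j : ι, v j • (Pi.single j (1:ℝ) : ι → ℝ) := by
  funext a
  rw [Finset.sum_apply]
  simp [Pi.single_apply, Finset.sum_ite_eq, mul_comm]

lemma clm_apply_eq_sum {F : Type*} [NormedAddCommGroup F] [NormedSpace ℝ F]
    (L : (ι → ℝ) →L[ℝ] F) (v : ι → ℝ) :
    L v = ∑ j : ι, v j • L (Pi.single j 1) := by
  conv_lhs => rw [vec_eq_sum v]
  rw [map_sum]
  simp

/-- first derivative along a line -/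
lemma hasDerivAt_line {φ : (ι → ℝ) → ℝ} (x v : ι → ℝ) (t : ℝ)
    (hd : DifferentiableAt ℝ φ (x + t • v)) :
    HasDerivAt (fun s : ℝ => φ (x + s • v)) (fderiv ℝ φ (x + t • v) v) t := by
  have hline : HasDerivAt (fun s : ℝ => x + s • v) v t := by
    simpa using ((hasDerivAt_id t).smul_const v).const_add x
  exact (hd.hasFDerivAt.comp_hasDerivAt t hline)

lemma hasDerivAt_line' {F : Type*} [NormedAddCommGroup F] [NormedSpace ℝ F]
    {φ : (ι → ℝ) → F} (x v : ι → ℝ) (t : ℝ)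
    (hd : DifferentiableAt ℝ φ (x + t • v)) :
    HasDerivAt (fun s : ℝ => φ (x + s • v)) (fderiv ℝ φ (x + t • v) v) t := by
  have hline : HasDerivAt (fun s : ℝ => x + s • v) v t := by
    simpa using ((hasDerivAt_id t).smul_const v).const_add x
  exact (hd.hasFDerivAt.comp_hasDerivAt t hline)

/-- evaluation of the fderiv of an fderiv -/
lemma fderiv_eval {φ : (ι → ℝ) → ℝ} (hφ : ContDiff ℝ 2 φ) (z w v : ι → ℝ) :
    fderiv ℝ (fun y => fderiv ℝ φ y v) z w = fderiv ℝ (fderiv ℝ φ) z w v := by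
  have hdf : DifferentiableAt ℝ (fderiv ℝ φ) z :=
    ((hφ.fderiv_right (m := 1) (le_refl 2)).differentiable one_ne_zero).differentiableAt
  have := fderiv_clm_apply (c := fderiv ℝ φ) (u := fun _ => v) hdf (differentiableAt_const v)
  rw [show (fun y => fderiv ℝ φ y v) = fun y => fderiv ℝ φ y ((fun _ => v) y) from rfl, this]
  simp

lemma hessComp_eq {φ : (ι → ℝ) → ℝ} (hφ : ContDiff ℝ 2 φ) (z : ι → ℝ) (a b : ι) :
    Matrix.of (fun a b => fderiv ℝ (fun y => fderiv ℝ φ y (Pi.single b 1)) z (Pi.single a 1)) a b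
      = fderiv ℝ (fderiv ℝ φ) z (Pi.single a 1) (Pi.single b 1) := by
  simp only [Matrix.of_apply]
  rw [fderiv_eval hφ]

/-- the second derivative applied to two vectors as a double sum of Hessian entries -/
lemma snd_fderiv_eq_sum {φ : (ι → ℝ) → ℝ} (hφ : ContDiff ℝ 2 φ) (z w v : ι → ℝ) :
    fderiv ℝ (fderiv ℝ φ) z w v
      = ∑ a : ι, ∑ b : ι, w a * v b * fderiv ℝ (fderiv ℝ φ) z (Pi.single a 1) (Pi.single b 1) := by
  rw [clm_apply_eq_sum (fderiv ℝ (fderiv ℝ φ) z) w]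
  rw [ContinuousLinearMap.sum_apply]
  apply Finset.sum_congr rfl; intro a _
  rw [ContinuousLinearMap.smul_apply]
  rw [clm_apply_eq_sum (fderiv ℝ (fderiv ℝ φ) z (Pi.single a 1)) v]
  rw [Finset.smul_sum]
  apply Finset.sum_congr rfl; intro b _
  simp [smul_eq_mul]; ring

/-- Schwarz symmetry -/
lemma snd_fderiv_symm {φ : (ι → ℝ) → ℝ} (hφ : ContDiff ℝ 2 φ) (z : ι → ℝ) (w v : ι → ℝ) :
    fderiv ℝ (fderiv ℝ φ) z w v = fderiv ℝ (fderiv ℝ φ) z v w := by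
  apply second_derivative_symmetric (f := φ) (f' := fderiv ℝ φ)
  · intro y
    exact ((hφ.differentiable (by norm_num)) y).hasFDerivAt
  · exact (((hφ.fderiv_right (m := 1) (le_refl 2)).differentiable one_ne_zero) z).hasFDerivAt

lemma posdef_diag_pos {κ : Type*} [Fintype κ] [DecidableEq κ] {Q : Matrix κ κ ℝ}
    (hQ : Q.PosDef) (k : κ) : 0 < Q k k := by
  exact hQ.diag_pos

lemma inv_of_isDiag {κ : Type*} [Fintype κ] [DecidableEq κ] {Q : Matrix κ κ ℝ}
    (hQ : Q.IsDiag) (hQ0 : ∀ k, Q k k ≠ 0) :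
    Q⁻¹ = Matrix.diagonal (fun k => (Q k k)⁻¹) := by
  apply Matrix.inv_eq_right_inv
  rw [← hQ.diagonal_diag, Matrix.diagonal_mul_diagonal]
  have e : (fun i => Q.diag i * (Matrix.diagonal Q.diag i i)⁻¹) = fun _ => (1:ℝ) := by
    funext k
    simp [Matrix.diag, mul_inv_cancel₀ (hQ0 k)]
  rw [e]
  exact Matrix.diagonal_one

lemma quadForm_diagonal {κ : Type*} [Fintype κ] [DecidableEq κ] (d : κ → ℝ) (w : κ → ℝ) :
    w ⬝ᵥ (Matrix.diagonal d).mulVec w = ∑ k : κ, d k * w k ^ 2 := by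
  unfold dotProduct
  apply Finset.sum_congr rfl; intro k _
  rw [Matrix.mulVec_diagonal]
  ring

lemma dot_diagonal_vec {κ : Type*} [Fintype κ] [DecidableEq κ] (d : κ → ℝ) (a b : κ → ℝ) :
    a ⬝ᵥ (Matrix.diagonal d).mulVec b = ∑ k : κ, d k * a k * b k := by
  unfold dotProduct
  apply Finset.sum_congr rfl; intro k _
  rw [Matrix.mulVec_diagonal]
  ring

lemma dot_transpose_vec {κ κ' : Type*} [Fintype κ] [Fintype κ'] (J : Matrix κ' κ ℝ)
    (a : κ → ℝ) (w : κ' → ℝ) : a ⬝ᵥ Jᵀ.mulVec w = (J.mulVec a) ⬝ᵥ w := by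
  rw [Matrix.dotProduct_mulVec, Matrix.vecMul_transpose]

lemma quad_expand {κ : Type*} [Fintype κ] (M : Matrix κ κ ℝ) (c w : κ → ℝ) (t : ℝ) :
    (c + t • w) ⬝ᵥ M.mulVec (c + t • w)
      = c ⬝ᵥ M.mulVec c + t * (c ⬝ᵥ M.mulVec w + w ⬝ᵥ M.mulVec c)
        + t ^ 2 * (w ⬝ᵥ M.mulVec w) := by
  rw [Matrix.mulVec_add, Matrix.mulVec_smul]
  simp only [add_dotProduct, smul_dotProduct, dotProduct_add,
    dotProduct_smul, smul_eq_mul]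
  ring

lemma quad_fromBlocks {κ κ' : Type*} [Fintype κ] [Fintype κ']
    (A : Matrix κ κ ℝ) (B : Matrix κ κ' ℝ) (C : Matrix κ' κ ℝ) (D : Matrix κ' κ' ℝ)
    (a : κ → ℝ) (b : κ' → ℝ) :
    (Sum.elim a b) ⬝ᵥ (Matrix.fromBlocks A B C D).mulVec (Sum.elim a b)
      = a ⬝ᵥ A.mulVec a + a ⬝ᵥ B.mulVec b + b ⬝ᵥ C.mulVec a + b ⬝ᵥ D.mulVec b := by
  rw [Matrix.fromBlocks_mulVec, sumElim_dotProduct_sumElim]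
  simp only [Sum.elim_comp_inl, Sum.elim_comp_inr, dotProduct_add]
  ring

lemma hasDerivAt_congr {f : ℝ → ℝ} {a b : ℝ} {t : ℝ} (hd : HasDerivAt f a t) (e : a = b) :
    HasDerivAt f b t := e ▸ hd

lemma convexOn_sum {E : Type*} [AddCommGroup E] [Module ℝ E] {ι : Type*} {s : Finset ι}
    {F : ι → E → ℝ} (hc : ∀ i ∈ s, ConvexOn ℝ Set.univ (F i)) :
    ConvexOn ℝ Set.univ (fun x => ∑ i ∈ s, F i x) := by
  classical
  induction s using Finset.induction_on with
  | empty => simpa using convexOn_const (0:ℝ) convex_univ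
  | insert _ _ hni ih =>
      rename_i a s'
      simp only [Finset.sum_insert hni]
      exact (hc a (Finset.mem_insert_self a s')).add
        (ih fun i hi => hc i (Finset.mem_insert_of_mem hi))

lemma dot_sum_mulVec {κ κ2 : Type*} [Fintype κ] [Fintype κ2] (s : Finset κ2)
    (M : κ2 → Matrix κ κ ℝ) (a b : κ → ℝ) :
    a ⬝ᵥ (∑ k ∈ s, M k).mulVec b = ∑ k ∈ s, a ⬝ᵥ (M k).mulVec b := by
  classical
  induction s using Finset.induction_on with
  | empty => simp [Matrix.mulVec, dotProduct]
  | insert _ _ hni ih =>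
      rename_i c s'
      simp only [Finset.sum_insert hni, Matrix.add_mulVec, dotProduct_add, ih]

lemma dot_smul_mulVec {κ : Type*} [Fintype κ] (c : ℝ) (M : Matrix κ κ ℝ) (a b : κ → ℝ) :
    a ⬝ᵥ (c • M).mulVec b = c * (a ⬝ᵥ M.mulVec b) := by
  rw [Matrix.smul_mulVec, dotProduct_smul, smul_eq_mul]

lemma dot_hess {n : ℕ} {φ : (Fin n → ℝ) → ℝ} (hφ : ContDiff ℝ 2 φ) (z aa : Fin n → ℝ) :
    aa ⬝ᵥ (hessComp φ z).mulVec aa = fderiv ℝ (fderiv ℝ φ) z aa aa := by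
  rw [snd_fderiv_eq_sum hφ]
  unfold dotProduct Matrix.mulVec hessComp
  apply Finset.sum_congr rfl; intro r _
  show aa r * (∑ s, _) = _
  rw [Finset.mul_sum]
  apply Finset.sum_congr rfl; intro s _
  simp only [Matrix.of_apply]
  rw [fderiv_eval hφ]
  ring

lemma hess_symm {n : ℕ} {φ : (Fin n → ℝ) → ℝ} (hφ : ContDiff ℝ 2 φ) (z : Fin n → ℝ)
    (a b : Fin n) : hessComp φ z a b = hessComp φ z b a := by
  unfold hessComp
  rw [hessComp_eq hφ, hessComp_eq hφ]
  exact snd_fderiv_symm hφ z _ _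

lemma jacRow_mulVec {n κ : Type*} [Fintype n] [DecidableEq n] [Fintype κ]
    (F : κ → (n → ℝ) → ℝ) (z a : n → ℝ) (k : κ) :
    (Matrix.of fun k j => fderiv ℝ (F k) z (Pi.single j 1)).mulVec a k
      = fderiv ℝ (F k) z a := by
  unfold Matrix.mulVec dotProduct
  rw [clm_apply_eq_sum (fderiv ℝ (F k) z) a]
  apply Finset.sum_congr rfl; intro j _
  simp [smul_eq_mul]
  ring

lemma sandwich_apply {n κ : Type*} [Fintype n] [DecidableEq n] [Fintype κ] [DecidableEq κ]
    (J : Matrix κ n ℝ) (d : κ → ℝ) (a b : n) :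
    (Jᵀ * Matrix.diagonal d * J) a b = ∑ c : κ, d c * J c a * J c b := by
  rw [Matrix.mul_apply]
  apply Finset.sum_congr rfl; intro c _
  rw [Matrix.mul_apply]
  simp [Matrix.diagonal, Matrix.transpose_apply, Finset.sum_ite_eq, mul_comm]

/-- abstract one-block `A₁₁` -/
noncomputable def blockA11 {n m p : ℕ} (f : (Fin n → ℝ) → (Fin m → ℝ) → (Fin n → ℝ))
    (h : (Fin n → ℝ) → (Fin p → ℝ))
    (Q : Matrix (Fin n) (Fin n) ℝ) (R : Matrix (Fin p) (Fin p) ℝ)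
    (P : Matrix (Fin n) (Fin n) ℝ) (ui : Fin m → ℝ) (yi : Fin p → ℝ) (pc : ℝ)
    (x z : Fin n → ℝ) : Matrix (Fin n) (Fin n) ℝ :=
  (jacF f ui x)ᵀ * Q⁻¹ * jacF f ui x
    + (∑ k : Fin n, ((f x ui k - z k) * Q⁻¹ k k) • hessComp (fun w => f w ui k) x)
    + (jacH h x)ᵀ * R⁻¹ * jacH h x
    + (∑ k : Fin p, ((h x k - yi k) * R⁻¹ k k) • hessComp (fun w => h w k) x)
    + pc • P⁻¹

/-- abstract one-block `H̿` -/
noncomputable def blockH {n m p : ℕ} (f : (Fin n → ℝ) → (Fin m → ℝ) → (Fin n → ℝ))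
    (h : (Fin n → ℝ) → (Fin p → ℝ))
    (Q : Matrix (Fin n) (Fin n) ℝ) (R : Matrix (Fin p) (Fin p) ℝ)
    (P : Matrix (Fin n) (Fin n) ℝ) (ui : Fin m → ℝ) (yi : Fin p → ℝ) (pc : ℝ)
    (x z : Fin n → ℝ) : Matrix (Fin n ⊕ Fin n) (Fin n ⊕ Fin n) ℝ :=
  Matrix.fromBlocks (blockA11 f h Q R P ui yi pc x z)
    (-((jacF f ui x)ᵀ * Q⁻¹)) (-(Q⁻¹ * jacF f ui x)) Q⁻¹

lemma convex_block {n m p : ℕ} (f : (Fin n → ℝ) → (Fin m → ℝ) → (Fin n → ℝ))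
    (hf : ContDiff ℝ 2 (fun q : (Fin n → ℝ) × (Fin m → ℝ) => f q.1 q.2))
    (h : (Fin n → ℝ) → (Fin p → ℝ)) (hh : ContDiff ℝ 2 h)
    (Q : Matrix (Fin n) (Fin n) ℝ) (hQdiag : Q.IsDiag) (hQpd : Q.PosDef)
    (R : Matrix (Fin p) (Fin p) ℝ) (hRdiag : R.IsDiag) (hRpd : R.PosDef)
    (P : Matrix (Fin n) (Fin n) ℝ) (hP : P.PosDef)
    (ui : Fin m → ℝ) (yi : Fin p → ℝ) (xhat : Fin n → ℝ) (pc : ℝ) (hpc : 0 ≤ pc)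
    (hdd' : ∀ (x z : Fin n → ℝ) (r : Fin n ⊕ Fin n),
      ∑ s ∈ Finset.univ.erase r, |blockH f h Q R P ui yi pc x z r s|
        ≤ |blockH f h Q R P ui yi pc x z r r|)
    (hdiag' : ∀ (x z : Fin n → ℝ) (a : Fin n), 0 ≤ blockA11 f h Q R P ui yi pc x z a a) :
    ConvexOn ℝ Set.univ (fun q : (Fin n → ℝ) × (Fin n → ℝ) =>
      quadForm Q⁻¹ (q.2 - f q.1 ui) + quadForm R⁻¹ (yi - h q.1)
        + pc * quadForm P⁻¹ (q.1 - xhat)) := by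
  -- diagonal data
  have hQ0 : ∀ k, Q k k ≠ 0 := fun k => ne_of_gt (posdef_diag_pos hQpd k)
  have hR0 : ∀ k, R k k ≠ 0 := fun k => ne_of_gt (posdef_diag_pos hRpd k)
  have hQinv : Q⁻¹ = Matrix.diagonal (fun k => (Q k k)⁻¹) := inv_of_isDiag hQdiag hQ0
  have hRinv : R⁻¹ = Matrix.diagonal (fun k => (R k k)⁻¹) := inv_of_isDiag hRdiag hR0
  have hqd : ∀ k, 0 ≤ (Q k k)⁻¹ := fun k => le_of_lt (inv_pos.2 (posdef_diag_pos hQpd k))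
  -- component smoothness
  have hfk : ∀ k : Fin n, ContDiff ℝ 2 (fun z : Fin n → ℝ => f z ui k) := by
    intro k
    have h1 : ContDiff ℝ 2 (fun z : Fin n → ℝ => f z ui) :=
      hf.comp (contDiff_id.prodMk contDiff_const)
    exact (ContinuousLinearMap.proj (R := ℝ) (φ := fun _ : Fin n => ℝ) k).contDiff.comp h1
  have hhk : ∀ k : Fin p, ContDiff ℝ 2 (fun z : Fin n → ℝ => h z k) := by
    intro k
    exact (ContinuousLinearMap.proj (R := ℝ) (φ := fun _ : Fin p => ℝ) k).contDiff.comp hh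
  have hfd : ∀ (k : Fin n) (zz : Fin n → ℝ), DifferentiableAt ℝ (fun w : Fin n → ℝ => f w ui k) zz :=
    fun k zz => ((hfk k).differentiable two_ne_zero).differentiableAt
  have hhd : ∀ (k : Fin p) (zz : Fin n → ℝ), DifferentiableAt ℝ (fun w : Fin n → ℝ => h w k) zz :=
    fun k zz => ((hhk k).differentiable two_ne_zero).differentiableAt
  have hfd1 : ∀ (k : Fin n) (aa zz : Fin n → ℝ),
      DifferentiableAt ℝ (fun w : Fin n → ℝ => fderiv ℝ (fun v : Fin n → ℝ => f v ui k) w aa) zz :=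
    fun k aa zz =>
      ((((hfk k).fderiv_right (m := 1) (le_refl 2)).differentiable one_ne_zero) zz).clm_apply
        (differentiableAt_const aa)
  have hhd1 : ∀ (k : Fin p) (aa zz : Fin n → ℝ),
      DifferentiableAt ℝ (fun w : Fin n → ℝ => fderiv ℝ (fun v : Fin n → ℝ => h v k) w aa) zz :=
    fun k aa zz =>
      ((((hhk k).fderiv_right (m := 1) (le_refl 2)).differentiable one_ne_zero) zz).clm_apply
        (differentiableAt_const aa)
  apply convexOn_univ_of_lines
  intro q w
  -- rewrite the restriction to the line as an explicit function g0
  have heq : (fun t : ℝ =>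
        quadForm Q⁻¹ ((q + t • w).2 - f (q + t • w).1 ui)
          + quadForm R⁻¹ (yi - h (q + t • w).1)
          + pc * quadForm P⁻¹ ((q + t • w).1 - xhat))
      = (fun t : ℝ =>
        (∑ k : Fin n, (Q k k)⁻¹ *
          ((q.2 k + t * w.2 k - f (q.1 + t • w.1) ui k)
            * (q.2 k + t * w.2 k - f (q.1 + t • w.1) ui k)))
        + (∑ k : Fin p, (R k k)⁻¹ *
          ((yi k - h (q.1 + t • w.1) k) * (yi k - h (q.1 + t • w.1) k)))
        + pc * ((q.1 - xhat) ⬝ᵥ P⁻¹.mulVec (q.1 - xhat)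
            + t * ((q.1 - xhat) ⬝ᵥ P⁻¹.mulVec w.1 + w.1 ⬝ᵥ P⁻¹.mulVec (q.1 - xhat))
            + (t * t) * (w.1 ⬝ᵥ P⁻¹.mulVec w.1))) := by
    funext t
    have e1 : (q + t • w).1 = q.1 + t • w.1 := rfl
    have e2 : (q + t • w).2 = q.2 + t • w.2 := rfl
    rw [e1, e2]
    have eP : q.1 + t • w.1 - xhat = (q.1 - xhat) + t • w.1 := by
      funext j; simp; ring
    unfold quadForm
    rw [hQinv, hRinv, quadForm_diagonal, quadForm_diagonal, eP, quad_expand]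
    have eq1 : ∀ k : Fin n, ((q.2 + t • w.2) - f (q.1 + t • w.1) ui) k
        = q.2 k + t * w.2 k - f (q.1 + t • w.1) ui k := by
      intro k; simp
    have eq2 : ∀ k : Fin p, (yi - h (q.1 + t • w.1)) k = yi k - h (q.1 + t • w.1) k := by
      intro k; simp
    congr 1
    · congr 1
      · apply Finset.sum_congr rfl; intro k _
        rw [eq1 k]; ring
      · apply Finset.sum_congr rfl; intro k _
        rw [eq2 k]; ring
    · ring
  rw [heq]
  apply convexOn_univ_of_hasDerivAt2
    (g1 := fun t =>
      (∑ k : Fin n, (Q k k)⁻¹ * (2 * ((q.2 k + t * w.2 k - f (q.1 + t • w.1) ui k)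
          * (w.2 k - fderiv ℝ (fun v : Fin n → ℝ => f v ui k) (q.1 + t • w.1) w.1))))
      + (∑ k : Fin p, (R k k)⁻¹ * (2 * ((yi k - h (q.1 + t • w.1) k)
          * (-(fderiv ℝ (fun v : Fin n → ℝ => h v k) (q.1 + t • w.1) w.1)))))
      + pc * (((q.1 - xhat) ⬝ᵥ P⁻¹.mulVec w.1 + w.1 ⬝ᵥ P⁻¹.mulVec (q.1 - xhat))
          + 2 * t * (w.1 ⬝ᵥ P⁻¹.mulVec w.1)))
    (g2 := fun t =>
      (∑ k : Fin n, (Q k k)⁻¹ * (2 *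
        ((w.2 k - fderiv ℝ (fun v : Fin n → ℝ => f v ui k) (q.1 + t • w.1) w.1)
          * (w.2 k - fderiv ℝ (fun v : Fin n → ℝ => f v ui k) (q.1 + t • w.1) w.1)
        + (q.2 k + t * w.2 k - f (q.1 + t • w.1) ui k)
          * (-(fderiv ℝ (fderiv ℝ (fun v : Fin n → ℝ => f v ui k)) (q.1 + t • w.1) w.1 w.1)))))
      + (∑ k : Fin p, (R k k)⁻¹ * (2 *
        ((-(fderiv ℝ (fun v : Fin n → ℝ => h v k) (q.1 + t • w.1) w.1))
          * (-(fderiv ℝ (fun v : Fin n → ℝ => h v k) (q.1 + t • w.1) w.1))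
        + (yi k - h (q.1 + t • w.1) k)
          * (-(fderiv ℝ (fderiv ℝ (fun v : Fin n → ℝ => h v k)) (q.1 + t • w.1) w.1 w.1)))))
      + pc * (2 * (w.1 ⬝ᵥ P⁻¹.mulVec w.1)))
  · -- first derivative
    intro t
    apply HasDerivAt.add
    apply HasDerivAt.add
    · apply HasDerivAt.fun_sum
      intro k _
      have hUf : HasDerivAt (fun t : ℝ => q.2 k + t * w.2 k - f (q.1 + t • w.1) ui k)
          (w.2 k - fderiv ℝ (fun v : Fin n → ℝ => f v ui k) (q.1 + t • w.1) w.1) t :=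
        hasDerivAt_congr ((((hasDerivAt_id t).mul_const (w.2 k)).const_add
          (q.2 k)).sub (hasDerivAt_line q.1 w.1 t (hfd k _))) (by first | ring1 | (simp only [id_eq]; ring1))
      exact hasDerivAt_congr ((hUf.mul hUf).const_mul ((Q k k)⁻¹)) (by first | ring1 | (simp only [id_eq]; ring1))
    · apply HasDerivAt.fun_sum
      intro k _
      have hUh : HasDerivAt (fun t : ℝ => yi k - h (q.1 + t • w.1) k)
          (-(fderiv ℝ (fun v : Fin n → ℝ => h v k) (q.1 + t • w.1) w.1)) t :=
        hasDerivAt_congr ((hasDerivAt_const t (yi k)).sub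
          (hasDerivAt_line q.1 w.1 t (hhd k _))) (by first | ring1 | (simp only [id_eq]; ring1))
      exact hasDerivAt_congr ((hUh.mul hUh).const_mul ((R k k)⁻¹)) (by first | ring1 | (simp only [id_eq]; ring1))
    · exact hasDerivAt_congr
        ((((hasDerivAt_const t ((q.1 - xhat) ⬝ᵥ P⁻¹.mulVec (q.1 - xhat))).add
            ((hasDerivAt_id t).mul_const
              ((q.1 - xhat) ⬝ᵥ P⁻¹.mulVec w.1 + w.1 ⬝ᵥ P⁻¹.mulVec (q.1 - xhat)))).add
          (((hasDerivAt_id t).mul (hasDerivAt_id t)).mul_const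
            (w.1 ⬝ᵥ P⁻¹.mulVec w.1))).const_mul pc) (by first | ring1 | (simp only [id_eq]; ring1))
  · -- second derivative
    intro t
    apply HasDerivAt.add
    apply HasDerivAt.add
    · apply HasDerivAt.fun_sum
      intro k _
      have hUf : HasDerivAt (fun t : ℝ => q.2 k + t * w.2 k - f (q.1 + t • w.1) ui k)
          (w.2 k - fderiv ℝ (fun v : Fin n → ℝ => f v ui k) (q.1 + t • w.1) w.1) t :=
        hasDerivAt_congr ((((hasDerivAt_id t).mul_const (w.2 k)).const_add
          (q.2 k)).sub (hasDerivAt_line q.1 w.1 t (hfd k _))) (by first | ring1 | (simp only [id_eq]; ring1))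
      have hD1f : HasDerivAt
          (fun t : ℝ => fderiv ℝ (fun v : Fin n → ℝ => f v ui k) (q.1 + t • w.1) w.1)
          (fderiv ℝ (fderiv ℝ (fun v : Fin n → ℝ => f v ui k)) (q.1 + t • w.1) w.1 w.1) t := by
        have := hasDerivAt_line (φ := fun y : Fin n → ℝ =>
          fderiv ℝ (fun v : Fin n → ℝ => f v ui k) y w.1) q.1 w.1 t (hfd1 k w.1 _)
        rwa [fderiv_eval (hfk k)] at this
      have hVf : HasDerivAt (fun t : ℝ =>
          w.2 k - fderiv ℝ (fun v : Fin n → ℝ => f v ui k) (q.1 + t • w.1) w.1)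
          (-(fderiv ℝ (fderiv ℝ (fun v : Fin n → ℝ => f v ui k)) (q.1 + t • w.1) w.1 w.1)) t :=
        hasDerivAt_congr ((hasDerivAt_const t (w.2 k)).sub hD1f) (by first | ring1 | (simp only [id_eq]; ring1))
      exact hasDerivAt_congr (((hUf.mul hVf).const_mul 2).const_mul ((Q k k)⁻¹)) (by first | ring1 | (simp only [id_eq]; ring1))
    · apply HasDerivAt.fun_sum
      intro k _
      have hUh : HasDerivAt (fun t : ℝ => yi k - h (q.1 + t • w.1) k)
          (-(fderiv ℝ (fun v : Fin n → ℝ => h v k) (q.1 + t • w.1) w.1)) t :=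
        hasDerivAt_congr ((hasDerivAt_const t (yi k)).sub
          (hasDerivAt_line q.1 w.1 t (hhd k _))) (by first | ring1 | (simp only [id_eq]; ring1))
      have hD1h : HasDerivAt
          (fun t : ℝ => fderiv ℝ (fun v : Fin n → ℝ => h v k) (q.1 + t • w.1) w.1)
          (fderiv ℝ (fderiv ℝ (fun v : Fin n → ℝ => h v k)) (q.1 + t • w.1) w.1 w.1) t := by
        have := hasDerivAt_line (φ := fun y : Fin n → ℝ =>
          fderiv ℝ (fun v : Fin n → ℝ => h v k) y w.1) q.1 w.1 t (hhd1 k w.1 _)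
        rwa [fderiv_eval (hhk k)] at this
      have hVh : HasDerivAt (fun t : ℝ =>
          -(fderiv ℝ (fun v : Fin n → ℝ => h v k) (q.1 + t • w.1) w.1))
          (-(fderiv ℝ (fderiv ℝ (fun v : Fin n → ℝ => h v k)) (q.1 + t • w.1) w.1 w.1)) t :=
        hD1h.neg
      exact hasDerivAt_congr (((hUh.mul hVh).const_mul 2).const_mul ((R k k)⁻¹)) (by first | ring1 | (simp only [id_eq]; ring1))
    · exact hasDerivAt_congr
        (((hasDerivAt_const t
            ((q.1 - xhat) ⬝ᵥ P⁻¹.mulVec w.1 + w.1 ⬝ᵥ P⁻¹.mulVec (q.1 - xhat))).add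
          (((hasDerivAt_id t).const_mul 2).mul_const
            (w.1 ⬝ᵥ P⁻¹.mulVec w.1))).const_mul pc) (by first | ring1 | (simp only [id_eq]; ring1))
  · -- nonnegativity of the second derivative
    intro t
    beta_reduce
    set X := q.1 + t • w.1 with hX
    set Z := q.2 + t • w.2 with hZdef
    have hZk : ∀ k : Fin n, Z k = q.2 k + t * w.2 k := fun k => rfl
    -- entries of jacobians applied to the direction
    have hJ : ∀ k : Fin n, (jacF f ui X).mulVec w.1 k
        = fderiv ℝ (fun v : Fin n → ℝ => f v ui k) X w.1 := by
      intro k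
      unfold jacF
      exact jacRow_mulVec (fun k v => f v ui k) X w.1 k
    have hJh : ∀ k : Fin p, (jacH h X).mulVec w.1 k
        = fderiv ℝ (fun v : Fin n → ℝ => h v k) X w.1 := by
      intro k
      unfold jacH
      exact jacRow_mulVec (fun k v => h v k) X w.1 k
    -- symmetry of the block matrix
    have hPinvsym : ∀ i j, P⁻¹ i j = P⁻¹ j i := by
      intro i j
      have hH : P⁻¹.IsHermitian := hP.1.inv
      conv_lhs => rw [← hH]
      simp [Matrix.conjTranspose_apply]
    have hA11sym : ∀ a c : Fin n, blockA11 f h Q R P ui yi pc X Z a c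
        = blockA11 f h Q R P ui yi pc X Z c a := by
      intro a c
      unfold blockA11
      simp only [Matrix.add_apply, Matrix.smul_apply, Matrix.sum_apply, smul_eq_mul]
      rw [hQinv, hRinv, sandwich_apply, sandwich_apply, sandwich_apply, sandwich_apply]
      congr 1
      congr 1
      congr 1
      · congr 1
        · apply Finset.sum_congr rfl; intro e _; ring
        · apply Finset.sum_congr rfl; intro k _
          rw [hess_symm (hfk k)]
      · apply Finset.sum_congr rfl; intro e _; ring
      · apply Finset.sum_congr rfl; intro k _
        rw [hess_symm (hhk k)]
      · rw [hPinvsym]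
    have hBC : ∀ a c : Fin n, ((jacF f ui X)ᵀ * Q⁻¹) a c = (Q⁻¹ * jacF f ui X) c a := by
      intro a c
      rw [hQinv]
      simp [Matrix.mul_apply, Matrix.diagonal, Finset.sum_ite_eq, Finset.sum_ite_eq',
        mul_comm]
    have hsym : ∀ r s, blockH f h Q R P ui yi pc X Z r s
        = blockH f h Q R P ui yi pc X Z s r := by
      intro r s
      unfold blockH
      cases r with
      | inl a =>
        cases s with
        | inl c => simp only [Matrix.fromBlocks_apply₁₁]; exact hA11sym a c
        | inr c =>
          simp only [Matrix.fromBlocks_apply₁₂, Matrix.fromBlocks_apply₂₁, Matrix.neg_apply]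
          rw [hBC]
      | inr a =>
        cases s with
        | inl c =>
          simp only [Matrix.fromBlocks_apply₁₂, Matrix.fromBlocks_apply₂₁, Matrix.neg_apply]
          rw [hBC]
        | inr c =>
          simp only [Matrix.fromBlocks_apply₂₂]
          rw [hQinv]
          by_cases hac : a = c <;> simp [Matrix.diagonal, hac, eq_comm]
    have hdg : ∀ r, 0 ≤ blockH f h Q R P ui yi pc X Z r r := by
      intro r
      cases r with
      | inl a =>
        simp only [blockH, Matrix.fromBlocks_apply₁₁]
        exact hdiag' X Z a
      | inr k =>
        simp only [blockH, Matrix.fromBlocks_apply₂₂]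
        rw [hQinv]
        simpa using hqd k
    have hnn : 0 ≤ (Sum.elim w.1 w.2) ⬝ᵥ
        (blockH f h Q R P ui yi pc X Z).mulVec (Sum.elim w.1 w.2) :=
      dd_quadForm_nonneg _ hsym hdg (hdd' X Z) _
    have h2q : (0:ℝ) ≤ 2 * ((Sum.elim w.1 w.2) ⬝ᵥ
        (blockH f h Q R P ui yi pc X Z).mulVec (Sum.elim w.1 w.2)) := by linarith
    convert h2q using 1
    -- now prove the identity
    unfold blockH blockA11
    rw [quad_fromBlocks]
    simp only [Matrix.add_mulVec, dotProduct_add]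
    -- pieces
    have hp1 : w.1 ⬝ᵥ ((jacF f ui X)ᵀ * Q⁻¹ * jacF f ui X).mulVec w.1
        = ∑ k : Fin n, (Q k k)⁻¹ * ((jacF f ui X).mulVec w.1 k * (jacF f ui X).mulVec w.1 k) := by
      rw [Matrix.mul_assoc, ← Matrix.mulVec_mulVec, dot_transpose_vec, ← Matrix.mulVec_mulVec,
        hQinv, dot_diagonal_vec]
      apply Finset.sum_congr rfl; intro k _; ring
    have hp2 : w.1 ⬝ᵥ (∑ k : Fin n, ((f X ui k - Z k) * Q⁻¹ k k) •
          hessComp (fun v => f v ui k) X).mulVec w.1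
        = ∑ k : Fin n, ((f X ui k - Z k) * (Q k k)⁻¹) *
            fderiv ℝ (fderiv ℝ (fun v : Fin n → ℝ => f v ui k)) X w.1 w.1 := by
      rw [dot_sum_mulVec]
      apply Finset.sum_congr rfl; intro k _
      rw [dot_smul_mulVec, dot_hess (hfk k), hQinv]
      simp [Matrix.diagonal_apply_eq]
    have hp3 : w.1 ⬝ᵥ ((jacH h X)ᵀ * R⁻¹ * jacH h X).mulVec w.1
        = ∑ k : Fin p, (R k k)⁻¹ * ((jacH h X).mulVec w.1 k * (jacH h X).mulVec w.1 k) := by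
      rw [Matrix.mul_assoc, ← Matrix.mulVec_mulVec, dot_transpose_vec, ← Matrix.mulVec_mulVec,
        hRinv, dot_diagonal_vec]
      apply Finset.sum_congr rfl; intro k _; ring
    have hp4 : w.1 ⬝ᵥ (∑ k : Fin p, ((h X k - yi k) * R⁻¹ k k) •
          hessComp (fun v => h v k) X).mulVec w.1
        = ∑ k : Fin p, ((h X k - yi k) * (R k k)⁻¹) *
            fderiv ℝ (fderiv ℝ (fun v : Fin n → ℝ => h v k)) X w.1 w.1 := by
      rw [dot_sum_mulVec]
      apply Finset.sum_congr rfl; intro k _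
      rw [dot_smul_mulVec, dot_hess (hhk k), hRinv]
      simp [Matrix.diagonal_apply_eq]
    have hp5 : w.1 ⬝ᵥ (pc • P⁻¹).mulVec w.1 = pc * (w.1 ⬝ᵥ P⁻¹.mulVec w.1) :=
      dot_smul_mulVec pc P⁻¹ w.1 w.1
    have hpB : w.1 ⬝ᵥ (-((jacF f ui X)ᵀ * Q⁻¹)).mulVec w.2
        = -∑ k : Fin n, (Q k k)⁻¹ * ((jacF f ui X).mulVec w.1 k) * w.2 k := by
      rw [Matrix.neg_mulVec, dotProduct_neg, ← Matrix.mulVec_mulVec, dot_transpose_vec,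
        hQinv, dot_diagonal_vec]
    have hpC : w.2 ⬝ᵥ (-(Q⁻¹ * jacF f ui X)).mulVec w.1
        = -∑ k : Fin n, (Q k k)⁻¹ * w.2 k * ((jacF f ui X).mulVec w.1 k) := by
      rw [Matrix.neg_mulVec, dotProduct_neg, ← Matrix.mulVec_mulVec,
        hQinv, dot_diagonal_vec]
    have hpD : w.2 ⬝ᵥ Q⁻¹.mulVec w.2 = ∑ k : Fin n, (Q k k)⁻¹ * w.2 k * w.2 k := by
      rw [hQinv, dot_diagonal_vec]
    rw [hp1, hp2, hp3, hp4, hp5, hpB, hpC, hpD]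
    -- merge the sums
    have eq_q : ∑ k : Fin n, (Q k k)⁻¹ * (2 *
        ((w.2 k - fderiv ℝ (fun v : Fin n → ℝ => f v ui k) X w.1)
          * (w.2 k - fderiv ℝ (fun v : Fin n → ℝ => f v ui k) X w.1)
        + (q.2 k + t * w.2 k - f X ui k)
          * (-(fderiv ℝ (fderiv ℝ (fun v : Fin n → ℝ => f v ui k)) X w.1 w.1))))
        = 2 * ((∑ k : Fin n, (Q k k)⁻¹ * ((jacF f ui X).mulVec w.1 k * (jacF f ui X).mulVec w.1 k))
          + (∑ k : Fin n, ((f X ui k - Z k) * (Q k k)⁻¹) *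
              fderiv ℝ (fderiv ℝ (fun v : Fin n → ℝ => f v ui k)) X w.1 w.1)
          + (∑ k : Fin n, (Q k k)⁻¹ * w.2 k * w.2 k)
          - (∑ k : Fin n, (Q k k)⁻¹ * ((jacF f ui X).mulVec w.1 k) * w.2 k)
          - (∑ k : Fin n, (Q k k)⁻¹ * w.2 k * ((jacF f ui X).mulVec w.1 k))) := by
      rw [← Finset.sum_add_distrib, ← Finset.sum_add_distrib, ← Finset.sum_sub_distrib,
        ← Finset.sum_sub_distrib, Finset.mul_sum]
      apply Finset.sum_congr rfl; intro k _
      rw [hJ k, hZk k]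
      ring
    have eq_r : ∑ k : Fin p, (R k k)⁻¹ * (2 *
        ((-(fderiv ℝ (fun v : Fin n → ℝ => h v k) X w.1))
          * (-(fderiv ℝ (fun v : Fin n → ℝ => h v k) X w.1))
        + (yi k - h X k)
          * (-(fderiv ℝ (fderiv ℝ (fun v : Fin n → ℝ => h v k)) X w.1 w.1))))
        = 2 * ((∑ k : Fin p, (R k k)⁻¹ * ((jacH h X).mulVec w.1 k * (jacH h X).mulVec w.1 k))
          + (∑ k : Fin p, ((h X k - yi k) * (R k k)⁻¹) *
              fderiv ℝ (fderiv ℝ (fun v : Fin n → ℝ => h v k)) X w.1 w.1)) := by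
      rw [← Finset.sum_add_distrib, Finset.mul_sum]
      apply Finset.sum_congr rfl; intro k _
      rw [hJh k]
      ring
    rw [eq_q, eq_r]
    ring

theorem mhe_convex_of_diag_dominant
    (n m p N : ℕ) (hn : 1 ≤ n) (hm : 1 ≤ m) (hp : 1 ≤ p) (hN : 1 ≤ N)
    (f : (Fin n → ℝ) → (Fin m → ℝ) → (Fin n → ℝ))
    (hf : ContDiff ℝ 2 (fun q : (Fin n → ℝ) × (Fin m → ℝ) => f q.1 q.2))
    (h : (Fin n → ℝ) → (Fin p → ℝ)) (hh : ContDiff ℝ 2 h)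
    (Q : Matrix (Fin n) (Fin n) ℝ) (hQdiag : Q.IsDiag) (hQpd : Q.PosDef)
    (R : Matrix (Fin p) (Fin p) ℝ) (hRdiag : R.IsDiag) (hRpd : R.PosDef)
    (P : Matrix (Fin n) (Fin n) ℝ) (hP : P.PosDef)
    (u : Fin N → Fin m → ℝ) (y : Fin N → Fin p → ℝ) (xhat : Fin n → ℝ)
    (hdd : ∀ (ξ : Fin (N + 1) × Fin n → ℝ) (i : Fin N) (r : Fin n ⊕ Fin n),
      ∑ s ∈ Finset.univ.erase r, |mheHbb f h Q R P u y ξ i r s|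
        ≤ |mheHbb f h Q R P u y ξ i r r|)
    (hdiag : ∀ (ξ : Fin (N + 1) × Fin n → ℝ) (i : Fin N) (a : Fin n),
      0 ≤ mheA11 f h Q R P u y ξ i a a) :
    ConvexOn ℝ Set.univ (mheF f h Q R P u y xhat) := by
  classical
  have i0 : Fin N := ⟨0, hN⟩
  have hsummand : ∀ i : Fin N, ConvexOn ℝ Set.univ (fun ξ : Fin (N+1) × Fin n → ℝ =>
      quadForm Q⁻¹ (blk ξ i.succ - f (blk ξ i.castSucc) (u i))
      + quadForm R⁻¹ (y i - h (blk ξ i.castSucc))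
      + (if (i : ℕ) = 0 then (1:ℝ) else 0) * quadForm P⁻¹ (blk ξ i.castSucc - xhat)) := by
    intro i
    set pc : ℝ := if (i : ℕ) = 0 then (1:ℝ) else 0 with hpc_def
    have hpc : 0 ≤ pc := by by_cases hi : (i : ℕ) = 0 <;> simp [hpc_def, hi]
    have hwit : ∀ x z : Fin n → ℝ, ∃ ξ : Fin (N+1) × Fin n → ℝ,
        blk ξ i.castSucc = x ∧ blk ξ i.succ = z := by
      intro x z
      refine ⟨fun pr => if pr.1 = i.castSucc then x pr.2
        else if pr.1 = i.succ then z pr.2 else 0, ?_, ?_⟩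
      · funext j; simp [blk]
      · funext j
        have hne : i.succ ≠ i.castSucc := by
          intro hcon
          have hv := congrArg Fin.val hcon
          simp [Fin.val_succ] at hv
        simp [blk, hne]
    have htrans : ∀ (x z : Fin n → ℝ) (ξ : Fin (N+1) × Fin n → ℝ),
        blk ξ i.castSucc = x → blk ξ i.succ = z →
        blockA11 f h Q R P (u i) (y i) pc x z = mheA11 f h Q R P u y ξ i := by
      intro x z ξ hx hz
      unfold blockA11 mheA11
      rw [hx, hz]
      congr 1
      by_cases hi : (i : ℕ) = 0 <;> simp [hpc_def, hi]
    have htransH : ∀ (x z : Fin n → ℝ) (ξ : Fin (N+1) × Fin n → ℝ),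
        blk ξ i.castSucc = x → blk ξ i.succ = z →
        blockH f h Q R P (u i) (y i) pc x z = mheHbb f h Q R P u y ξ i := by
      intro x z ξ hx hz
      unfold blockH mheHbb
      rw [htrans x z ξ hx hz, hx]
    have hdd' : ∀ (x z : Fin n → ℝ) (r : Fin n ⊕ Fin n),
        ∑ s ∈ Finset.univ.erase r, |blockH f h Q R P (u i) (y i) pc x z r s|
          ≤ |blockH f h Q R P (u i) (y i) pc x z r r| := by
      intro x z r
      obtain ⟨ξ, hx, hz⟩ := hwit x z
      rw [htransH x z ξ hx hz]
      exact hdd ξ i r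
    have hdiag' : ∀ (x z : Fin n → ℝ) (a : Fin n),
        0 ≤ blockA11 f h Q R P (u i) (y i) pc x z a a := by
      intro x z a
      obtain ⟨ξ, hx, hz⟩ := hwit x z
      rw [htrans x z ξ hx hz]
      exact hdiag ξ i a
    have hcb := convex_block f hf h hh Q hQdiag hQpd R hRdiag hRpd P hP (u i) (y i)
      xhat pc hpc hdd' hdiag'
    let L : (Fin (N+1) × Fin n → ℝ) →ₗ[ℝ] ((Fin n → ℝ) × (Fin n → ℝ)) :=
      { toFun := fun ξ => (blk ξ i.castSucc, blk ξ i.succ)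
        map_add' := fun ξ η => rfl
        map_smul' := fun c ξ => rfl }
    have hcomp := hcb.comp_affineMap L.toAffineMap
    simp only [Set.preimage_univ] at hcomp
    exact hcomp
  have hFeq : mheF f h Q R P u y xhat = fun ξ : Fin (N+1) × Fin n → ℝ => ∑ i : Fin N,
      (quadForm Q⁻¹ (blk ξ i.succ - f (blk ξ i.castSucc) (u i))
       + quadForm R⁻¹ (y i - h (blk ξ i.castSucc))
       + (if (i : ℕ) = 0 then (1:ℝ) else 0) * quadForm P⁻¹ (blk ξ i.castSucc - xhat)) := by
    funext ξ
    unfold mheF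
    simp only [Finset.sum_add_distrib]
    congr 1
    have hterm : ∀ i : Fin N,
        (if (i : ℕ) = 0 then (1:ℝ) else 0) * quadForm P⁻¹ (blk ξ i.castSucc - xhat)
        = if i = (⟨0, hN⟩ : Fin N) then quadForm P⁻¹ (blk ξ 0 - xhat) else 0 := by
      intro i
      by_cases hi : i = (⟨0, hN⟩ : Fin N)
      · subst hi
        have h0 : Fin.castSucc (⟨0, hN⟩ : Fin N) = (0 : Fin (N+1)) := by
          apply Fin.ext; simp
        simp [h0]
      · have hvi : ¬((i : ℕ) = 0) := by
          intro hcon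
          exact hi (Fin.ext (by simp [hcon]))
        simp [hi, hvi]
    rw [Finset.sum_congr rfl (fun i _ => hterm i), Finset.sum_ite_eq' Finset.univ]
    simp
  rw [hFeq]
  exact convexOn_sum (fun i _ => hsummand i)
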